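/- Let K = [[p, b], [c, p]] be a 2×2 real matrix with equal diagonal entries and determinant 1 (i.e., p² − bc = 1). Then the set of powers {Kⁿ : n ∈ ℕ} is bounded (in any norm on 2×2 real matrices) if and only if there exist real numbers φ and γ with γ ≠ 0 such that p = cos φ and b = −γ²·c. -/

import Mathlib

/-- Auxiliary sequence: `t` and `u` coefficients of powers of `!![p,b;c,p]`
with `d = b*c`. -/
def tuSeq (p d : ℝ) : ℕ → ℝ × ℝ
  | 0 => (1, 0)
  | n+1 => (p * (tuSeq p d n).1 + d * (tuSeq p d n).2,
            (tuSeq p d n).1 + p * (tuSeq p d n).2)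

lemma pow_entries (p b c : ℝ) (n : ℕ) :
    (!![p, b; c, p]) ^ n =
      !![(tuSeq p (b*c) n).1, b * (tuSeq p (b*c) n).2;
         c * (tuSeq p (b*c) n).2, (tuSeq p (b*c) n).1] := by
  induction n with
  | zero => simp [tuSeq, Matrix.one_fin_two]
  | succ n ih =>
      rw [pow_succ, ih, Matrix.mul_fin_two]
      ext i j
      fin_cases i <;> fin_cases j <;> simp [tuSeq] <;> ring

lemma tuSeq_neg (p d : ℝ) (n : ℕ) :
    tuSeq (-p) d n = ((-1)^n * (tuSeq p d n).1, -((-1)^n * (tuSeq p d n).2)) := by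
  induction n with
  | zero => simp [tuSeq]
  | succ n ih => simp [tuSeq, ih, pow_succ]; constructor <;> ring

lemma tuSeq_growth (p : ℝ) (hp : 1 < p) (n : ℕ) :
    1 + n * (p - 1) ≤ (tuSeq p (p^2 - 1) n).1 ∧ 0 ≤ (tuSeq p (p^2 - 1) n).2 := by
  induction n with
  | zero => simp [tuSeq]
  | succ n ih =>
      obtain ⟨h1, h2⟩ := ih
      constructor
      · show 1 + (n+1 : ℕ) * (p - 1) ≤ p * (tuSeq p (p^2-1) n).1 + (p^2-1) * (tuSeq p (p^2-1) n).2
        push_cast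
        have h3 : p * (1 + n * (p - 1)) ≤ p * (tuSeq p (p^2-1) n).1 :=
          mul_le_mul_of_nonneg_left h1 (by linarith)
        nlinarith [mul_nonneg (by nlinarith : (0:ℝ) ≤ p^2 - 1) h2,
          mul_nonneg (Nat.cast_nonneg (α := ℝ) n) (by nlinarith : (0:ℝ) ≤ (p-1)^2)]
      · show 0 ≤ (tuSeq p (p^2-1) n).1 + p * (tuSeq p (p^2-1) n).2
        nlinarith [Nat.cast_nonneg (α := ℝ) n]

lemma tuSeq_abs_growth (p : ℝ) (hq : 1 < |p|) (n : ℕ) :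
    1 + n * (|p| - 1) ≤ |(tuSeq p (p^2 - 1) n).1| := by
  rcases le_or_gt 0 p with h | h
  · have h1 : |p| = p := abs_of_nonneg h
    rw [h1] at hq ⊢
    exact le_trans (tuSeq_growth p hq n).1 (le_abs_self _)
  · have h1 : |p| = -p := abs_of_neg h
    rw [h1] at hq ⊢
    have h2 : p ^ 2 - 1 = (-p) ^ 2 - 1 := by ring
    have h3 := tuSeq_neg (-p) ((-p)^2 - 1) n
    rw [neg_neg] at h3
    rw [h2, h3]
    simp only [abs_mul, abs_pow, abs_neg, abs_one, one_pow, one_mul]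
    exact le_trans (tuSeq_growth (-p) hq n).1 (le_abs_self _)

lemma tuSeq_trig (φ : ℝ) (hs : Real.sin φ ≠ 0) (n : ℕ) :
    tuSeq (Real.cos φ) (-(Real.sin φ)^2) n
      = (Real.cos (n * φ), Real.sin (n * φ) / Real.sin φ) := by
  induction n with
  | zero => simp [tuSeq]
  | succ n ih =>
      have hc : ((n+1 : ℕ) : ℝ) * φ = n * φ + φ := by push_cast; ring
      simp only [tuSeq, ih, hc, Real.cos_add, Real.sin_add, Prod.mk.injEq]
      refine ⟨?_, ?_⟩ <;> field_simp <;> ring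

lemma tuSeq_d_zero (p : ℝ) (n : ℕ) : (tuSeq p 0 n).1 = p ^ n := by
  induction n with
  | zero => simp [tuSeq]
  | succ n ih => simp [tuSeq, ih, pow_succ]; ring

lemma tuSeq_u_unit (p : ℝ) (hp : p^2 = 1) (n : ℕ) :
    (tuSeq p 0 n).2 = n * p ^ n * p := by
  induction n with
  | zero => simp [tuSeq]
  | succ n ih =>
      show (tuSeq p 0 n).1 + p * (tuSeq p 0 n).2 = _
      rw [tuSeq_d_zero, ih]
      push_cast
      linear_combination (-(p:ℝ)^n) * hp

theorem stability_criterion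
    (p b c : ℝ) (hdet : p ^ 2 - b * c = 1)
    (K : Matrix (Fin 2) (Fin 2) ℝ) (hK : K = !![p, b; c, p]) :
    (∃ C : ℝ, ∀ (n : ℕ) (i j : Fin 2), |(K ^ n) i j| ≤ C) ↔
      ∃ φ γ : ℝ, γ ≠ 0 ∧ p = Real.cos φ ∧ b = -γ ^ 2 * c := by
  subst hK
  constructor
  · rintro ⟨C, hC⟩
    rcases lt_trichotomy (p^2) 1 with hp | hp | hp
    · -- |p| < 1 : boundedness not needed
      have hbc : b * c < 0 := by nlinarith
      have hc : c ≠ 0 := by rintro rfl; simp at hbc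
      have h1 : b / c = (b*c) / (c^2) := by field_simp
      have h2 : b / c < 0 := by
        rw [h1]
        exact div_neg_of_neg_of_pos (by linarith) (by positivity)
      have hpos : 0 < -(b / c) := by linarith
      refine ⟨Real.arccos p, Real.sqrt (-(b/c)), ?_, ?_, ?_⟩
      · positivity
      · rw [Real.cos_arccos (by nlinarith) (by nlinarith)]
      · rw [Real.sq_sqrt hpos.le]
        field_simp
    · -- p² = 1 : boundedness forces b = c = 0
      have hbc : b * c = 0 := by nlinarith
      have habsp : |p| = 1 := by
        rw [← Real.sqrt_one, ← hp, Real.sqrt_sq_eq_abs]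
      have key : ∀ x : ℝ, (∀ n : ℕ, |x * (tuSeq p (b*c) n).2| ≤ C) → x = 0 := by
        intro x hx
        by_contra hx0
        have hxpos : 0 < |x| := abs_pos.mpr hx0
        obtain ⟨n, hn⟩ := exists_nat_gt (C / |x|)
        have habs : |x * (tuSeq p (b*c) n).2| = |x| * n := by
          rw [hbc, tuSeq_u_unit p hp]
          simp [abs_mul, abs_pow, habsp, Nat.abs_cast]
        have hle := hx n
        rw [habs] at hle
        rw [div_lt_iff₀ hxpos] at hn
        nlinarith
      have hb0 : b = 0 := by
        apply key
        intro n
        have := hC n 0 1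
        rw [pow_entries] at this
        simpa using this
      have hc0 : c = 0 := by
        apply key
        intro n
        have := hC n 1 0
        rw [pow_entries] at this
        simpa using this
      have hpm : p = 1 ∨ p = -1 := by
        have h : (p - 1) * (p + 1) = 0 := by nlinarith
        rcases mul_eq_zero.mp h with h | h
        · left; linarith
        · right; linarith
      rcases hpm with h | h
      · exact ⟨0, 1, one_ne_zero, by rw [h, Real.cos_zero], by rw [hb0, hc0]; ring⟩
      · exact ⟨Real.pi, 1, one_ne_zero, by rw [h, Real.cos_pi], by rw [hb0, hc0]; ring⟩
    · -- p² > 1 : contradiction with boundedness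
      exfalso
      have hq : 1 < |p| := by
        rw [← Real.sqrt_one, ← Real.sqrt_sq_eq_abs]
        exact Real.sqrt_lt_sqrt (by norm_num) hp
      have hd : b * c = p ^ 2 - 1 := by linarith
      have hT : ∀ n : ℕ, 1 + n * (|p| - 1) ≤ |(tuSeq p (b*c) n).1| := by
        intro n
        rw [hd]
        exact tuSeq_abs_growth p hq n
      obtain ⟨n, hn⟩ := exists_nat_gt ((C - 1) / (|p| - 1))
      have hCn : |(tuSeq p (b*c) n).1| ≤ C := by
        have := hC n 0 0
        rw [pow_entries] at this
        simpa using this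
      rw [div_lt_iff₀ (by linarith)] at hn
      linarith [hT n]
  · rintro ⟨φ, γ, hγ, hp, hb⟩
    rcases eq_or_ne (Real.sin φ) 0 with hs | hs
    · -- p = ±1, forces b = c = 0
      have hp2 : p^2 = 1 := by
        rw [hp, ← Real.sin_sq_add_cos_sq φ, hs]; ring
      have hbc : b * c = 0 := by linarith
      have hc : c = 0 := by
        by_contra hc
        rw [hb] at hbc
        have : γ^2 * c^2 = 0 := by nlinarith
        have : γ = 0 ∨ c = 0 := by
          rcases mul_eq_zero.mp this with h | h
          · left; exact pow_eq_zero_iff (n := 2) (by norm_num) |>.mp h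
          · right; exact pow_eq_zero_iff (n := 2) (by norm_num) |>.mp h
        tauto
      have hbz : b = 0 := by rw [hb, hc]; ring
      have habsp : |p| = 1 := by
        rw [← Real.sqrt_one, ← hp2, Real.sqrt_sq_eq_abs]
      refine ⟨1, fun n i j => ?_⟩
      rw [pow_entries]
      fin_cases i <;> fin_cases j <;>
        simp [hbz, hc, tuSeq_d_zero, abs_pow, habsp]
    · -- rotation case
      have hd : b * c = -(Real.sin φ)^2 := by
        have : p^2 = Real.cos φ ^ 2 := by rw [hp]
        nlinarith [Real.sin_sq_add_cos_sq φ]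
      refine ⟨1 + |b| / |Real.sin φ| + |c| / |Real.sin φ|, fun n i j => ?_⟩
      rw [pow_entries, hd, hp, tuSeq_trig φ hs]
      have hsa : 0 < |Real.sin φ| := abs_pos.mpr hs
      have hcb : |Real.cos (n * φ)| ≤ 1 := Real.abs_cos_le_one _
      have hob : ∀ x : ℝ, |x * (Real.sin (n*φ) / Real.sin φ)| ≤ |x| / |Real.sin φ| := by
        intro x
        calc |x * (Real.sin (n*φ) / Real.sin φ)|
            = |x| * (|Real.sin (n*φ)| / |Real.sin φ|) := by rw [abs_mul, abs_div]
          _ ≤ |x| * (1 / |Real.sin φ|) := by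
              gcongr
              exact Real.abs_sin_le_one _
          _ = |x| / |Real.sin φ| := by ring
      have hbnn : 0 ≤ |b| / |Real.sin φ| := by positivity
      have hcnn : 0 ≤ |c| / |Real.sin φ| := by positivity
      fin_cases i <;> fin_cases j <;> simp <;> linarith [hob b, hob c, abs_mul b (Real.sin (n*φ) / Real.sin φ), abs_mul c (Real.sin (n*φ) / Real.sin φ)]
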